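/- The sum over positive integer solutions of the alternating q-series identity Σ_{i=0}^{2n} (−1)^i (−q;q)_{2n−i} / ((q²;q)_{2n−i} (q;q)_{i+1}) = (−q;q)_{2n+1}/(q²;q)_{2n+1} holds for every nonnegative integer n. -/

import Mathlib

noncomputable section

/-- The q-Pochhammer symbol `(a;q)_m = ∏_{t=0}^{m−1}(1 − a q^t)` in `ℚ(q)`. -/
def qPoch (a : RatFunc ℚ) (m : ℕ) : RatFunc ℚ :=
  ∏ t ∈ Finset.range m, (1 - a * RatFunc.X ^ t)

namespace QPochAux

open Finset

/-- `(q;q)_m`. -/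
def qp (m : ℕ) : RatFunc ℚ := qPoch RatFunc.X m
/-- `(−q;q)_m`. -/
def qc (m : ℕ) : RatFunc ℚ := qPoch (-RatFunc.X) m
/-- `(q²;q)_m`. -/
def qd (m : ℕ) : RatFunc ℚ := qPoch (RatFunc.X ^ 2) m
/-- Gaussian binomial as a rational function. -/
def qb (M j : ℕ) : RatFunc ℚ := qp M / (qp j * qp (M - j))

lemma qp_zero : qp 0 = 1 := by simp [qp, qPoch]
lemma qc_zero : qc 0 = 1 := by simp [qc, qPoch]

lemma qp_succ (m : ℕ) : qp (m + 1) = qp m * (1 - RatFunc.X ^ (m + 1)) := by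
  rw [qp, qp, qPoch, qPoch, Finset.prod_range_succ, pow_succ']

lemma qc_succ (m : ℕ) : qc (m + 1) = qc m * (1 + RatFunc.X ^ (m + 1)) := by
  rw [qc, qc, qPoch, qPoch, Finset.prod_range_succ]
  ring_nf

lemma qd_succ (m : ℕ) : qd (m + 1) = qd m * (1 - RatFunc.X ^ (m + 2)) := by
  rw [qd, qd, qPoch, qPoch, Finset.prod_range_succ]
  congr 1
  rw [← pow_add]
  ring_nf

lemma one_sub_X_pow_ne (k : ℕ) (hk : k ≠ 0) : (1 : RatFunc ℚ) - RatFunc.X ^ k ≠ 0 := by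
  rw [← RatFunc.algebraMap_X, ← map_pow, ← map_one (algebraMap (Polynomial ℚ) (RatFunc ℚ)),
    ← map_sub]
  apply RatFunc.algebraMap_ne_zero
  intro h
  have := congrArg (Polynomial.eval 0) h
  simp [zero_pow hk] at this

lemma one_add_X_pow_ne (k : ℕ) : (1 : RatFunc ℚ) + RatFunc.X ^ k ≠ 0 := by
  rw [← RatFunc.algebraMap_X, ← map_pow, ← map_one (algebraMap (Polynomial ℚ) (RatFunc ℚ)),
    ← map_add]
  apply RatFunc.algebraMap_ne_zero
  intro h
  have := congrArg (Polynomial.eval 0) h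
  rcases eq_or_ne k 0 with hk | hk
  · simp [hk] at this
  · simp [zero_pow hk] at this

lemma qp_ne (m : ℕ) : qp m ≠ 0 := by
  induction m with
  | zero => simp [qp_zero]
  | succ m ih =>
      rw [qp_succ]
      exact mul_ne_zero ih (one_sub_X_pow_ne (m + 1) (by omega))

lemma qd_ne (m : ℕ) : qd m ≠ 0 := by
  induction m with
  | zero => simp [qd, qPoch]
  | succ m ih =>
      rw [qd_succ]
      exact mul_ne_zero ih (one_sub_X_pow_ne (m + 2) (by omega))

lemma qb_zero (M : ℕ) : qb M 0 = 1 := by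
  rw [qb, qp_zero, Nat.sub_zero, one_mul, div_self (qp_ne M)]

lemma qb_self (M : ℕ) : qb M M = 1 := by
  rw [qb, Nat.sub_self, qp_zero, mul_one, div_self (qp_ne M)]

/-- q-Pascal, uniform in `j ≤ M`. -/
lemma pascal (M j : ℕ) (hj : j ≤ M) :
    qb (M + 1) j = qb M j + RatFunc.X ^ (M + 1 - j) *
      (if j = 0 then 0 else qb M (j - 1)) := by
  rcases j with _ | k
  · simp [qb_zero]
  · simp only [Nat.succ_ne_zero, if_false, Nat.add_sub_cancel]
    have hk : k + 1 ≤ M := hj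
    have h1 : M + 1 - (k + 1) = M - k := by omega
    have h2 : M - (k + 1) = M - k - 1 := by omega
    have h3 : M - k = (M - k - 1) + 1 := by omega
    rw [qb, qb, qb, h1, h2]
    rw [qp_succ M, qp_succ k]
    have e2 : qp (M - k) = qp (M - k - 1) * (1 - RatFunc.X ^ (M - k)) := by
      rw [h3, qp_succ, ← h3]
    rw [e2]
    have hpow : (RatFunc.X : RatFunc ℚ) ^ (M + 1) =
        RatFunc.X ^ (M - k) * RatFunc.X ^ (k + 1) := by
      rw [← pow_add]; congr 1; omega
    rw [hpow]
    have n1 := qp_ne M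
    have n2 := qp_ne k
    have n3 := qp_ne (M - k - 1)
    have n4 := one_sub_X_pow_ne (k + 1) (by omega)
    have n5 := one_sub_X_pow_ne (M - k) (by omega)
    field_simp
    ring

/-- The key alternating polynomial sum. -/
def Ssum (M : ℕ) : RatFunc ℚ :=
  ∑ j ∈ Finset.range M, (-1 : RatFunc ℚ) ^ j * qb M j * qc (M - 1 - j)

lemma Ssum_succ (M : ℕ) : Ssum (M + 1) = Ssum M + (-1) ^ M := by
  have expand : Ssum (M + 1) =
      (∑ j ∈ Finset.range (M + 1), (-1 : RatFunc ℚ) ^ j * qb M j * qc (M - j)) +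
      (∑ j ∈ Finset.range (M + 1), (-1 : RatFunc ℚ) ^ j * (RatFunc.X ^ (M + 1 - j) *
        (if j = 0 then 0 else qb M (j - 1))) * qc (M - j)) := by
    rw [Ssum, ← Finset.sum_add_distrib]
    refine Finset.sum_congr rfl fun j hj => ?_
    have hjM : j ≤ M := by have := Finset.mem_range.mp hj; omega
    have : M + 1 - 1 - j = M - j := by omega
    rw [this, pascal M j hjM]
    ring
  rw [expand]
  rw [Finset.sum_range_succ (fun j => (-1 : RatFunc ℚ) ^ j * qb M j * qc (M - j)) M]
  have hB : (∑ j ∈ Finset.range (M + 1), (-1 : RatFunc ℚ) ^ j * (RatFunc.X ^ (M + 1 - j) *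
        (if j = 0 then 0 else qb M (j - 1))) * qc (M - j)) =
      ∑ j ∈ Finset.range M,
        (-1 : RatFunc ℚ) ^ (j + 1) * (RatFunc.X ^ (M - j) * qb M j) * qc (M - 1 - j) := by
    rw [Finset.sum_range_succ' (fun j => (-1 : RatFunc ℚ) ^ j * (RatFunc.X ^ (M + 1 - j) *
        (if j = 0 then 0 else qb M (j - 1))) * qc (M - j)) M]
    simp only [reduceIte, mul_zero, zero_mul, add_zero, mul_one]
    refine Finset.sum_congr rfl fun j hj => ?_
    have e1 : M + 1 - (j + 1) = M - j := by omega
    have e2 : M - (j + 1) = M - 1 - j := by omega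
    rw [e1, e2, Nat.add_sub_cancel, if_neg (Nat.succ_ne_zero j)]
  rw [hB, qb_self, Nat.sub_self, qc_zero]
  have key : ∀ j ∈ Finset.range M,
      (-1 : RatFunc ℚ) ^ j * qb M j * qc (M - j) +
        (-1 : RatFunc ℚ) ^ (j + 1) * (RatFunc.X ^ (M - j) * qb M j) * qc (M - 1 - j) =
      (-1 : RatFunc ℚ) ^ j * qb M j * qc (M - 1 - j) := by
    intro j hj
    have hjM : j < M := Finset.mem_range.mp hj
    have h3 : M - j = (M - 1 - j) + 1 := by omega
    have : qc (M - j) = qc (M - 1 - j) * (1 + RatFunc.X ^ (M - j)) := by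
      rw [h3, qc_succ, ← h3]
    rw [this]
    ring
  calc (∑ j ∈ Finset.range M, (-1 : RatFunc ℚ) ^ j * qb M j * qc (M - j)) + (-1) ^ M * 1 * 1 +
        ∑ j ∈ Finset.range M, (-1 : RatFunc ℚ) ^ (j + 1) *
          (RatFunc.X ^ (M - j) * qb M j) * qc (M - 1 - j)
      = (∑ j ∈ Finset.range M, ((-1 : RatFunc ℚ) ^ j * qb M j * qc (M - j) +
          (-1 : RatFunc ℚ) ^ (j + 1) * (RatFunc.X ^ (M - j) * qb M j) * qc (M - 1 - j)))
        + (-1) ^ M := by rw [Finset.sum_add_distrib]; ring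
    _ = Ssum M + (-1) ^ M := by
        rw [Finset.sum_congr rfl key]; rfl

lemma Ssum_even (n : ℕ) : Ssum (2 * n) = 0 := by
  induction n with
  | zero => simp [Ssum]
  | succ n ih =>
      have h : 2 * (n + 1) = (2 * n + 1) + 1 := by ring
      rw [h, Ssum_succ, Ssum_succ, ih]
      have : ((-1 : RatFunc ℚ)) ^ (2 * n + 1) = -((-1) ^ (2 * n)) := by ring
      rw [this]
      simp [pow_mul]

lemma qd_eq (m : ℕ) : (1 - RatFunc.X) * qd m = qp (m + 1) := by
  induction m with
  | zero => simp [qd, qPoch, qp_succ, qp_zero]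
  | succ m ih =>
      rw [qd_succ, qp_succ, ← ih]
      ring

end QPochAux

open QPochAux Finset in
/-- `Σ_{i=0}^{2n} (−1)^i (−q;q)_{2n−i} / ((q²;q)_{2n−i} (q;q)_{i+1})
  = (−q;q)_{2n+1} / (q²;q)_{2n+1}`. -/
theorem alternating_qPoch_identity (n : ℕ) :
    ∑ i ∈ Finset.range (2 * n + 1),
      (-1 : RatFunc ℚ) ^ i * qPoch (-RatFunc.X) (2 * n - i) /
        (qPoch (RatFunc.X ^ 2) (2 * n - i) * qPoch RatFunc.X (i + 1)) =
    qPoch (-RatFunc.X) (2 * n + 1) / qPoch (RatFunc.X ^ 2) (2 * n + 1) := by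
  show (∑ i ∈ Finset.range (2 * n + 1),
      (-1 : RatFunc ℚ) ^ i * qc (2 * n - i) / (qd (2 * n - i) * qp (i + 1))) =
      qc (2 * n + 1) / qd (2 * n + 1)
  have hX : (1 : RatFunc ℚ) - RatFunc.X ≠ 0 := by
    have := one_sub_X_pow_ne 1 (by omega)
    simpa using this
  -- the key sum fact from Ssum (2n+2) = 0
  have hs : ∑ i ∈ Finset.range (2 * n + 1),
      (-1 : RatFunc ℚ) ^ i * qb (2 * n + 2) (i + 1) * qc (2 * n - i) = qc (2 * n + 1) := by
    have h0 : (∑ j ∈ Finset.range (2 * n + 2),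
        (-1 : RatFunc ℚ) ^ j * qb (2 * n + 2) j * qc (2 * n + 1 - j)) = 0 := by
      have h := Ssum_even (n + 1)
      rw [show 2 * (n + 1) = 2 * n + 2 by ring, Ssum] at h
      rw [← h]
      exact Finset.sum_congr rfl fun j hj => by
        rw [show 2 * n + 1 - j = 2 * n + 2 - 1 - j from by omega]
    rw [Finset.sum_range_succ'] at h0
    have h2 : ∀ i ∈ Finset.range (2 * n + 1),
        (-1 : RatFunc ℚ) ^ (i + 1) * qb (2 * n + 2) (i + 1) * qc (2 * n + 1 - (i + 1)) =
        -((-1 : RatFunc ℚ) ^ i * qb (2 * n + 2) (i + 1) * qc (2 * n - i)) := by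
      intro i hi
      rw [show 2 * n + 1 - (i + 1) = 2 * n - i from by omega]
      ring
    rw [Finset.sum_congr rfl h2, Finset.sum_neg_distrib, qb_zero] at h0
    simp only [pow_zero, one_mul, mul_one, Nat.sub_zero] at h0
    linear_combination -h0
  -- per-term transformation
  have hterm : ∀ i ∈ Finset.range (2 * n + 1),
      (-1 : RatFunc ℚ) ^ i * qc (2 * n - i) / (qd (2 * n - i) * qp (i + 1)) =
      (1 - RatFunc.X) / qp (2 * n + 2) *
        ((-1 : RatFunc ℚ) ^ i * qb (2 * n + 2) (i + 1) * qc (2 * n - i)) := by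
    intro i hi
    have hi' : i ≤ 2 * n := by have := Finset.mem_range.mp hi; omega
    have hdd : (1 - RatFunc.X) * qd (2 * n - i) = qp (2 * n - i + 1) := qd_eq (2 * n - i)
    have hsub : 2 * n + 2 - (i + 1) = 2 * n - i + 1 := by omega
    have hq : qd (2 * n - i) = qp (2 * n - i + 1) / (1 - RatFunc.X) := by
      rw [eq_div_iff hX, mul_comm]; exact hdd
    rw [qb, hsub, hq]
    have n1 := qp_ne (2 * n + 2)
    have n2 := qp_ne (i + 1)
    have n3 := qp_ne (2 * n - i + 1)
    field_simp
  rw [Finset.sum_congr rfl hterm, ← Finset.mul_sum, hs]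
  have hdd : (1 - RatFunc.X) * qd (2 * n + 1) = qp (2 * n + 2) := qd_eq (2 * n + 1)
  have hq : qd (2 * n + 1) = qp (2 * n + 2) / (1 - RatFunc.X) := by
    rw [eq_div_iff hX, mul_comm]; exact hdd
  rw [hq]
  have n1 := qp_ne (2 * n + 2)
  field_simp
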